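/- Let $r,q\ge 1$, $n=qr+1$, $k\ge 1$, and let $T$ be a $(kn)\times r$ array with entries in $\{1,\dots,n\}$ such that rows are strictly increasing, columns weakly increasing, every value appears exactly $rk$ times, $T(kn,j)\le jq+1$ for all $j$, and $T(1,j)\ge(j-2)q+m_{j-1}+1$ for $2\le j\le r$ with fixed $1\le m_i\le q$. Define the $n\times r$ subarray $T'$ by taking row $m$ of $T'$ to be row $k(m-1)+1$ of $T$ for $1\le m\le r$, and row $km$ of $T$ for $r+1\le m\le n$. Then $T'$ again has strictly increasing rows, weakly increasing columns, every value in $\{1,\dots,n\}$ appearing exactly $r$ times, $T'(n,j)\le jq+1$ for all $j$, and $T'(1,j)\ge (j-2)q+m_{j-1}+1$ for $2\le j\le r$. -/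

import Mathlib

/-- The selected row for index `i`: row `k(i-1)+1` for `i ≤ r`, row `ki` otherwise. -/
def subSel (k r i : ℕ) : ℕ := if i ≤ r then k * (i - 1) + 1 else k * i

/-- Number of selected indices in `[1,n]` whose selected row is `≤ a`. -/
def subFc (k r n a : ℕ) : ℕ := ((Finset.Icc 1 n).filter fun i => subSel k r i ≤ a).card

/-- Number of entries `≤ t` in column `j` of the first `N` rows. -/
def subCol (T : ℕ → ℕ → ℕ) (N j t : ℕ) : ℕ :=
  ((Finset.Icc 1 N).filter fun i => T i j ≤ t).card

/-- Down-closed subsets of `Icc 1 M` are initial segments. -/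
lemma subLower (M : ℕ) (S : Finset ℕ) (hS : S ⊆ Finset.Icc 1 M)
    (hlow : ∀ x ∈ S, ∀ y, 1 ≤ y → y ≤ x → y ∈ S) (i : ℕ) :
    i ∈ S ↔ 1 ≤ i ∧ i ≤ S.card := by
  constructor
  · intro hi
    have h1 : 1 ≤ i := (Finset.mem_Icc.mp (hS hi)).1
    refine ⟨h1, ?_⟩
    have hsub : Finset.Icc 1 i ⊆ S := by
      intro y hy
      rw [Finset.mem_Icc] at hy
      exact hlow i hi y hy.1 hy.2
    calc i = (Finset.Icc 1 i).card := by rw [Nat.card_Icc]; omega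
    _ ≤ S.card := Finset.card_le_card hsub
  · rintro ⟨h1, h2⟩
    by_contra hi
    have hsub : S ⊆ Finset.Icc 1 (i - 1) := by
      intro x hx
      rw [Finset.mem_Icc]
      refine ⟨(Finset.mem_Icc.mp (hS hx)).1, ?_⟩
      by_contra hxi
      exact hi (hlow x hx i h1 (by omega))
    have := Finset.card_le_card hsub
    rw [Nat.card_Icc] at this
    omega

/-- Card of a filtered product as a sum of column cards. -/
lemma subProd (N r : ℕ) (P : ℕ → ℕ → Prop) [∀ i j, Decidable (P i j)] :
    ((Finset.Icc 1 N ×ˢ Finset.Icc 1 r).filter fun p => P p.1 p.2).card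
      = ∑ j ∈ Finset.Icc 1 r, ((Finset.Icc 1 N).filter fun i => P i j).card := by
  rw [Finset.card_eq_sum_card_fiberwise
    (f := Prod.snd) (t := Finset.Icc 1 r)
    (fun x hx => (Finset.mem_product.mp (Finset.mem_filter.mp hx).1).2)]
  refine Finset.sum_congr rfl fun j hj => ?_
  have himg : (((Finset.Icc 1 N ×ˢ Finset.Icc 1 r).filter fun p => P p.1 p.2).filter
      fun x => x.2 = j)
      = ((Finset.Icc 1 N).filter fun i => P i j).image (fun i => (i, j)) := by
    ext ⟨a, b⟩
    simp only [Finset.mem_filter, Finset.mem_image, Finset.mem_product]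
    constructor
    · rintro ⟨⟨⟨ha, hb⟩, hP⟩, rfl⟩
      exact ⟨a, ⟨ha, hP⟩, rfl⟩
    · rintro ⟨i, ⟨hi, hP⟩, heq⟩
      obtain ⟨rfl, rfl⟩ : i = a ∧ j = b := by
        constructor <;> [exact congrArg Prod.fst heq; exact congrArg Prod.snd heq]
      exact ⟨⟨⟨hi, hj⟩, hP⟩, rfl⟩
  rw [himg, Finset.card_image_of_injective _ (fun a b hab => by
    simpa using congrArg Prod.fst hab)]

lemma subFc_zero (k r n : ℕ) (hk : 0 < k) : subFc k r n 0 = 0 := by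
  rw [subFc, Finset.card_eq_zero, Finset.filter_eq_empty_iff]
  intro i hi
  rw [Finset.mem_Icc] at hi
  simp only [subSel]
  split_ifs with h
  · omega
  · have : k * 1 ≤ k * i := Nat.mul_le_mul_left k hi.1
    omega

lemma subFc_mul (k r n S : ℕ) (hk : 0 < k) (hS : S ≤ n) : subFc k r n (k * S) = S := by
  have hset : (Finset.Icc 1 n).filter (fun i => subSel k r i ≤ k * S) = Finset.Icc 1 S := by
    ext i
    simp only [Finset.mem_filter, Finset.mem_Icc]; simp only [subSel]
    constructor
    · rintro ⟨⟨h1, h2⟩, hle⟩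
      refine ⟨h1, ?_⟩
      split_ifs at hle with hir
      · have hlt : k * (i - 1) < k * S := by omega
        have := Nat.lt_of_mul_lt_mul_left hlt
        omega
      · exact Nat.le_of_mul_le_mul_left hle hk
    · rintro ⟨h1, h2⟩
      refine ⟨⟨h1, le_trans h2 hS⟩, ?_⟩
      split_ifs with hir
      · have h3 : k * (i - 1 + 1) ≤ k * S := Nat.mul_le_mul_left k (by omega)
        rw [Nat.mul_succ] at h3
        omega
      · exact Nat.mul_le_mul_left k h2
  rw [subFc, hset, Nat.card_Icc]; omega

lemma subFc_cross (k r n S x y : ℕ) (hk : 0 < k) (hrn : r ≤ n)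
    (hxy : x + y = k * S) (hS : S ≤ n) (hy : y ≤ k * r) (hx : k * r ≤ x)
    (hxn : x ≤ k * n) : subFc k r n x + subFc k r n y = S := by
  obtain ⟨u, v, hyuv, hv⟩ : ∃ u v, y = k * u + v ∧ v < k :=
    ⟨y / k, y % k, (Nat.div_add_mod y k).symm, Nat.mod_lt _ hk⟩
  have hu : u ≤ r := Nat.le_of_mul_le_mul_left (by omega) hk
  by_cases hv0 : v = 0
  · have huS : u ≤ S := Nat.le_of_mul_le_mul_left (by omega) hk
    have hx' : x = k * (S - u) := by
      have h1 : k * (S - u) + k * u = k * S := by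
        rw [← Nat.mul_add]; congr 1; omega
      omega
    have hy' : y = k * u := by omega
    rw [hx', hy', subFc_mul k r n _ hk (by omega), subFc_mul k r n _ hk (by omega)]
    omega
  · obtain ⟨u', v', hxuv, hv'⟩ : ∃ u' v', x = k * u' + v' ∧ v' < k :=
      ⟨x / k, x % k, (Nat.div_add_mod x k).symm, Nat.mod_lt _ hk⟩
    have hsum : k * (u + u') + (v + v') = k * S := by rw [Nat.mul_add]; omega
    have huu'S : u + u' ≤ S := Nat.le_of_mul_le_mul_left (by omega) hk
    have hS2 : S < u + u' + 2 := by
      refine Nat.lt_of_mul_lt_mul_left (a := k) ?_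
      have h3 : k * (u + u' + 2) = k * (u + u') + (k + k) := by ring
      omega
    have hSeq : S = u + u' + 1 := by
      rcases Nat.lt_or_ge (u + u') S with h | h
      · omega
      · exfalso
        have h4 : u + u' = S := by omega
        rw [h4] at hsum
        omega
    rw [hSeq] at hsum
    have hkk : k * (u + u' + 1) = k * (u + u') + k := by ring
    have hvv' : v + v' = k := by omega
    have hur : u < r := by
      refine Nat.lt_of_mul_lt_mul_left (a := k) ?_
      omega
    have hru' : r ≤ u' := by
      have h5 : r < u' + 1 := by
        refine Nat.lt_of_mul_lt_mul_left (a := k) ?_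
        have h6 : k * (u' + 1) = k * u' + k := by ring
        omega
      omega
    have hu'n : u' ≤ n := Nat.le_of_mul_le_mul_left (by omega) hk
    have hfy : subFc k r n y = u + 1 := by
      have hset : (Finset.Icc 1 n).filter (fun i => subSel k r i ≤ y)
          = Finset.Icc 1 (u + 1) := by
        ext i
        simp only [Finset.mem_filter, Finset.mem_Icc]; simp only [subSel]
        constructor
        · rintro ⟨⟨h1, h2⟩, hle⟩
          refine ⟨h1, ?_⟩
          split_ifs at hle with hir
          · have hlt : i - 1 < u + 1 := by
              refine Nat.lt_of_mul_lt_mul_left (a := k) ?_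
              have h7 : k * (u + 1) = k * u + k := by ring
              omega
            omega
          · exfalso
            have h8 : k * i ≤ k * r := by omega
            have := Nat.le_of_mul_le_mul_left h8 hk
            omega
        · rintro ⟨h1, h2⟩
          have hir : i ≤ r := by omega
          refine ⟨⟨h1, by omega⟩, ?_⟩
          rw [if_pos hir]
          have h9 : k * (i - 1) ≤ k * u := Nat.mul_le_mul_left k (by omega)
          omega
      rw [subFc, hset, Nat.card_Icc]; omega
    have hfx : subFc k r n x = u' := by
      have hset : (Finset.Icc 1 n).filter (fun i => subSel k r i ≤ x)
          = Finset.Icc 1 u' := by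
        ext i
        simp only [Finset.mem_filter, Finset.mem_Icc]; simp only [subSel]
        constructor
        · rintro ⟨⟨h1, h2⟩, hle⟩
          refine ⟨h1, ?_⟩
          split_ifs at hle with hir
          · omega
          · have hlt : i < u' + 1 := by
              refine Nat.lt_of_mul_lt_mul_left (a := k) ?_
              have h10 : k * (u' + 1) = k * u' + k := by ring
              omega
            omega
        · rintro ⟨h1, h2⟩
          refine ⟨⟨h1, by omega⟩, ?_⟩
          split_ifs with hir
          · have h11 : k * (i - 1 + 1) ≤ k * r := Nat.mul_le_mul_left k (by omega)
            rw [Nat.mul_succ] at h11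
            omega
          · have h12 : k * i ≤ k * u' := Nat.mul_le_mul_left k h2
            omega
      rw [subFc, hset, Nat.card_Icc]; omega
    rw [hfx, hfy]; omega
theorem subtableau_degree_one
    (r q : ℕ) (hr : 0 < r) (hq : 0 < q) (n : ℕ) (hn : n = q * r + 1)
    (k : ℕ) (hk : 0 < k)
    (m : ℕ → ℕ) (hm : ∀ i : ℕ, 1 ≤ i → i ≤ r - 1 → 1 ≤ m i ∧ m i ≤ q)
    (T : ℕ → ℕ → ℕ)
    (hentries : ∀ i j : ℕ, 1 ≤ i → i ≤ k * n → 1 ≤ j → j ≤ r → 1 ≤ T i j ∧ T i j ≤ n)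
    (hrows : ∀ i j : ℕ, 1 ≤ i → i ≤ k * n → 1 ≤ j → j < r → T i j < T i (j + 1))
    (hcols : ∀ i j : ℕ, 1 ≤ i → i < k * n → 1 ≤ j → j ≤ r → T i j ≤ T (i + 1) j)
    (hcount : ∀ t : ℕ, 1 ≤ t → t ≤ n →
      (((Finset.Icc 1 (k * n)) ×ˢ (Finset.Icc 1 r)).filter
        (fun p => T p.1 p.2 = t)).card = r * k)
    (hlast : ∀ j : ℕ, 1 ≤ j → j ≤ r → T (k * n) j ≤ j * q + 1)
    (hfirst : ∀ j : ℕ, 2 ≤ j → j ≤ r → (j - 2) * q + m (j - 1) + 1 ≤ T 1 j) :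
    ∀ T' : ℕ → ℕ → ℕ,
      (∀ i j : ℕ, T' i j = if i ≤ r then T (k * (i - 1) + 1) j else T (k * i) j) →
      ((∀ i j : ℕ, 1 ≤ i → i ≤ n → 1 ≤ j → j ≤ r → 1 ≤ T' i j ∧ T' i j ≤ n) ∧
       (∀ i j : ℕ, 1 ≤ i → i ≤ n → 1 ≤ j → j < r → T' i j < T' i (j + 1)) ∧
       (∀ i j : ℕ, 1 ≤ i → i < n → 1 ≤ j → j ≤ r → T' i j ≤ T' (i + 1) j) ∧
       (∀ t : ℕ, 1 ≤ t → t ≤ n →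
         (((Finset.Icc 1 n) ×ˢ (Finset.Icc 1 r)).filter
           (fun p => T' p.1 p.2 = t)).card = r) ∧
       (∀ j : ℕ, 1 ≤ j → j ≤ r → T' n j ≤ j * q + 1) ∧
       (∀ j : ℕ, 2 ≤ j → j ≤ r → (j - 2) * q + m (j - 1) + 1 ≤ T' 1 j)) := by
  intro T' hT'
  -- basic numeric facts
  have hrqr : r ≤ q * r := Nat.le_mul_of_pos_left r hq
  have hrn : r < n := by omega
  have hn1 : 1 ≤ n := by omega
  have hkn1 : 1 ≤ k * n := Nat.mul_pos hk (by omega)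
  -- the selection map
  have hT's : ∀ i j : ℕ, T' i j = T (subSel k r i) j := by
    intro i j
    rw [hT' i j, subSel]
    split_ifs <;> rfl
  have hselmem : ∀ i, 1 ≤ i → i ≤ n → 1 ≤ subSel k r i ∧ subSel k r i ≤ k * n := by
    intro i h1 h2
    rw [subSel]
    split_ifs with h
    · refine ⟨by omega, ?_⟩
      have h3 : k * (i - 1 + 1) ≤ k * n := Nat.mul_le_mul_left k (by omega)
      rw [Nat.mul_succ] at h3
      omega
    · exact ⟨by have := Nat.mul_le_mul_left k h1; omega, Nat.mul_le_mul_left k h2⟩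
  have hselmono : ∀ i, 1 ≤ i → i < n → subSel k r i ≤ subSel k r (i + 1) := by
    intro i h1 h2
    simp only [subSel]
    split_ifs with ha hb hb
    · have : k * (i - 1) ≤ k * (i + 1 - 1) := Nat.mul_le_mul_left k (by omega)
      omega
    · have : k * (i - 1 + 1) ≤ k * (i + 1) := Nat.mul_le_mul_left k (by omega)
      rw [Nat.mul_succ] at this
      omega
    · omega
    · have : k * i ≤ k * (i + 1) := Nat.mul_le_mul_left k (by omega)
      omega
  -- column monotonicity
  have hcolmono : ∀ j, 1 ≤ j → j ≤ r → ∀ i i', 1 ≤ i → i ≤ i' → i' ≤ k * n →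
      T i j ≤ T i' j := by
    intro j hj1 hj2 i i' hi1 hii'
    induction i', hii' using Nat.le_induction with
    | base => intro _; exact le_rfl
    | succ p hp ih =>
      intro hpk
      exact le_trans (ih (by omega)) (hcols p j (by omega) (by omega) hj1 hj2)
  -- basic facts about column counts
  have hA_le : ∀ j t, subCol T (k * n) j t ≤ k * n := by
    intro j t
    refine le_trans (Finset.card_filter_le _ _) ?_
    rw [Nat.card_Icc]; omega
  have hA_mono : ∀ j t t', t ≤ t' → subCol T (k * n) j t ≤ subCol T (k * n) j t' := by
    intro j t t' htt'
    exact Finset.card_le_card (Finset.monotone_filter_right _ (fun i _ hi => le_trans hi htt'))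
  have hA_full : ∀ j, 1 ≤ j → j ≤ r → ∀ t, j * q + 1 ≤ t → subCol T (k * n) j t = k * n := by
    intro j hj1 hj2 t ht
    rw [subCol, Finset.filter_true_of_mem, Nat.card_Icc]
    · omega
    · intro i hi
      rw [Finset.mem_Icc] at hi
      calc T i j ≤ T (k * n) j := hcolmono j hj1 hj2 i (k * n) hi.1 hi.2 le_rfl
      _ ≤ j * q + 1 := hlast j hj1 hj2
      _ ≤ t := ht
  have hA_zero : ∀ j, 2 ≤ j → j ≤ r → ∀ t, t < (j - 2) * q + m (j - 1) + 1 →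
      subCol T (k * n) j t = 0 := by
    intro j hj2 hjr t ht
    rw [subCol, Finset.card_eq_zero, Finset.filter_eq_empty_iff]
    intro i hi
    rw [Finset.mem_Icc] at hi
    have h1 : T 1 j ≤ T i j := hcolmono j (by omega) hjr 1 i le_rfl hi.1 hi.2
    have h2 := hfirst j hj2 hjr
    omega
  have hA_zero0 : ∀ j, 1 ≤ j → j ≤ r → subCol T (k * n) j 0 = 0 := by
    intro j hj1 hjr
    rw [subCol, Finset.card_eq_zero, Finset.filter_eq_empty_iff]
    intro i hi
    rw [Finset.mem_Icc] at hi
    have := (hentries i j hi.1 hi.2 hj1 hjr).1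
    omega
  have hprefix : ∀ j, 1 ≤ j → j ≤ r → ∀ t i, 1 ≤ i → i ≤ k * n →
      (T i j ≤ t ↔ i ≤ subCol T (k * n) j t) := by
    intro j hj1 hj2 t i hi1 hi2
    have hmem := subLower (k * n) ((Finset.Icc 1 (k * n)).filter fun i => T i j ≤ t)
      (Finset.filter_subset _ _) ?_ i
    · constructor
      · intro h
        exact (hmem.mp (Finset.mem_filter.mpr ⟨Finset.mem_Icc.mpr ⟨hi1, hi2⟩, h⟩)).2
      · intro h
        exact (Finset.mem_filter.mp (hmem.mpr ⟨hi1, h⟩)).2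
    · intro x hx y hy1 hyx
      rw [Finset.mem_filter, Finset.mem_Icc] at hx ⊢
      exact ⟨⟨hy1, by omega⟩, le_trans (hcolmono j hj1 hj2 y x hy1 hyx hx.1.2) hx.2⟩
  -- total count of entries ≤ t in T
  have hprodle : ∀ t, t ≤ n →
      ((Finset.Icc 1 (k * n) ×ˢ Finset.Icc 1 r).filter
        (fun p => T p.1 p.2 ≤ t)).card = t * (r * k) := by
    intro t
    induction t with
    | zero =>
      intro _
      rw [Nat.zero_mul, Finset.card_eq_zero, Finset.filter_eq_empty_iff]
      intro p hp
      rw [Finset.mem_product, Finset.mem_Icc, Finset.mem_Icc] at hp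
      have := (hentries p.1 p.2 hp.1.1 hp.1.2 hp.2.1 hp.2.2).1
      omega
    | succ t ih =>
      intro ht
      have hcg : (Finset.Icc 1 (k * n) ×ˢ Finset.Icc 1 r).filter
            (fun p => T p.1 p.2 ≤ t + 1)
          = ((Finset.Icc 1 (k * n) ×ˢ Finset.Icc 1 r).filter
            (fun p => T p.1 p.2 ≤ t)) ∪
            ((Finset.Icc 1 (k * n) ×ˢ Finset.Icc 1 r).filter
            (fun p => T p.1 p.2 = t + 1)) := by
        rw [← Finset.filter_or]
        exact Finset.filter_congr (fun p _ => by omega)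
      rw [hcg, Finset.card_union_of_disjoint, ih (by omega), hcount (t + 1) (by omega) ht]
      · have : (t + 1) * (r * k) = t * (r * k) + r * k := by ring
        omega
      · rw [Finset.disjoint_left]
        intro p hp1 hp2
        rw [Finset.mem_filter] at hp1 hp2
        omega
  have hAsum : ∀ t, t ≤ n → ∑ j ∈ Finset.Icc 1 r, subCol T (k * n) j t = t * (r * k) := by
    intro t ht
    calc ∑ j ∈ Finset.Icc 1 r, subCol T (k * n) j t
        = ((Finset.Icc 1 (k * n) ×ˢ Finset.Icc 1 r).filter
            (fun p => T p.1 p.2 ≤ t)).card := (subProd (k * n) r (fun i j => T i j ≤ t)).symm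
    _ = t * (r * k) := hprodle t ht
  -- interval splitting helpers
  have hIoc : Finset.Icc 1 r = Finset.Ioc 0 r := by
    rw [← Finset.Icc_add_one_left_eq_Ioc]; rfl
  have hsplit : ∀ (g : ℕ → ℕ) (w : ℕ) (c : ℕ), c < r → (∀ j, 1 ≤ j → j ≤ c → g j = w) →
      (∀ j, c + 3 ≤ j → j ≤ r → g j = 0) →
      ∑ j ∈ Finset.Icc 1 r, g j
        = c * w + g (c + 1) + (if c + 2 ≤ r then g (c + 2) else 0) := by
    intro g w c hc hgw hg0
    rw [hIoc]
    rw [← Finset.sum_Ioc_consecutive g (Nat.zero_le c) (le_of_lt hc)]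
    have h1 : ∑ j ∈ Finset.Ioc 0 c, g j = c * w := by
      calc ∑ j ∈ Finset.Ioc 0 c, g j = ∑ _j ∈ Finset.Ioc 0 c, w :=
            Finset.sum_congr rfl (fun j hj => by
              rw [Finset.mem_Ioc] at hj; exact hgw j hj.1 hj.2)
      _ = c * w := by rw [Finset.sum_const, Nat.card_Ioc, smul_eq_mul]; norm_num
    by_cases hc2 : c + 2 ≤ r
    · rw [← Finset.sum_Ioc_consecutive g (show c ≤ c + 1 by omega) (show c + 1 ≤ r by omega)]
      rw [← Finset.sum_Ioc_consecutive g (show c + 1 ≤ c + 2 by omega) hc2]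
      have h2 : ∑ j ∈ Finset.Ioc c (c + 1), g j = g (c + 1) := by
        rw [Nat.Ioc_succ_singleton, Finset.sum_singleton]
      have h3 : ∑ j ∈ Finset.Ioc (c + 1) (c + 2), g j = g (c + 2) := by
        rw [Nat.Ioc_succ_singleton, Finset.sum_singleton]
      have h4 : ∑ j ∈ Finset.Ioc (c + 2) r, g j = 0 :=
        Finset.sum_eq_zero (fun j hj => by
          rw [Finset.mem_Ioc] at hj; exact hg0 j (by omega) hj.2)
      rw [h1, h2, h3, h4, if_pos hc2]
      omega
    · have hc1 : r = c + 1 := by omega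
      rw [hc1, Nat.Ioc_succ_singleton, Finset.sum_singleton, h1, if_neg (by omega)]
      omega
  -- the central counting identity
  have hFsum : ∀ t, t ≤ n →
      ∑ j ∈ Finset.Icc 1 r, subFc k r n (subCol T (k * n) j t) = t * r := by
    intro t ht
    rcases Nat.eq_zero_or_pos t with rfl | ht1
    · rw [Nat.zero_mul]
      refine Finset.sum_eq_zero (fun j hj => ?_)
      rw [Finset.mem_Icc] at hj
      rw [hA_zero0 j hj.1 hj.2, subFc_zero k r n hk]
    · obtain ⟨c, e, htc, he⟩ : ∃ c e, t = q * c + e + 1 ∧ e < q :=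
        ⟨(t - 1) / q, (t - 1) % q, by have := Nat.div_add_mod (t - 1) q; omega,
          Nat.mod_lt _ hq⟩
      by_cases hcr : r ≤ c
      · have hqq : q * r ≤ q * c := Nat.mul_le_mul_left q hcr
        have htn : t = n := by omega
        have hconst : ∀ j ∈ Finset.Icc 1 r, subFc k r n (subCol T (k * n) j t) = n := by
          intro j hj
          rw [Finset.mem_Icc] at hj
          have hjq : j * q ≤ r * q := Nat.mul_le_mul_right q hj.2
          have hcomm : r * q = q * r := Nat.mul_comm r q
          rw [hA_full j hj.1 hj.2 t (by omega), subFc_mul k r n n hk le_rfl]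
        calc ∑ j ∈ Finset.Icc 1 r, subFc k r n (subCol T (k * n) j t)
            = ∑ _j ∈ Finset.Icc 1 r, n := Finset.sum_congr rfl hconst
        _ = t * r := by
            rw [Finset.sum_const, Nat.card_Icc, smul_eq_mul, htn]
            have h5 : r + 1 - 1 = r := by omega
            rw [h5]
            exact Nat.mul_comm r n
      · push_neg at hcr
        have hfull : ∀ j, 1 ≤ j → j ≤ c → subCol T (k * n) j t = k * n := by
          intro j hj1 hj2
          apply hA_full j hj1 (by omega)
          have h1 : j * q ≤ c * q := Nat.mul_le_mul_right q hj2
          have h2 : c * q = q * c := Nat.mul_comm c q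
          omega
        have hzero : ∀ j, c + 3 ≤ j → j ≤ r → subCol T (k * n) j t = 0 := by
          intro j hj1 hj2
          apply hA_zero j (by omega) hj2
          have h1 : q * (c + 1) ≤ q * (j - 2) := Nat.mul_le_mul_left q (by omega)
          have h2 : q * (c + 1) = q * c + q := by ring
          have h3 : q * (j - 2) = (j - 2) * q := Nat.mul_comm q _
          omega
        have hSc : c ≤ (e + 1) * r := by
          have h1 : 1 * r ≤ (e + 1) * r := Nat.mul_le_mul_right r (by omega)
          omega
        have hSle : (e + 1) * r - c ≤ n := by
          have h1 : (e + 1) * r ≤ q * r := Nat.mul_le_mul_right r (by omega)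
          omega
        have hsF : ∑ j ∈ Finset.Icc 1 r, subFc k r n (subCol T (k * n) j t)
            = c * n + subFc k r n (subCol T (k * n) (c + 1) t)
              + (if c + 2 ≤ r then subFc k r n (subCol T (k * n) (c + 2) t) else 0) :=
          hsplit (fun j => subFc k r n (subCol T (k * n) j t)) n c hcr
            (fun j hj1 hj2 => by
              show subFc k r n (subCol T (k * n) j t) = n
              rw [hfull j hj1 hj2, subFc_mul k r n n hk le_rfl])
            (fun j hj1 hj2 => by
              show subFc k r n (subCol T (k * n) j t) = 0
              rw [hzero j hj1 hj2, subFc_zero k r n hk])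
        have hsA : ∑ j ∈ Finset.Icc 1 r, subCol T (k * n) j t
            = c * (k * n) + subCol T (k * n) (c + 1) t
              + (if c + 2 ≤ r then subCol T (k * n) (c + 2) t else 0) :=
          hsplit (fun j => subCol T (k * n) j t) (k * n) c hcr hfull hzero
        rw [hAsum t ht] at hsA
        have hid : c * (k * n) + k * ((e + 1) * r - c) = t * (r * k) := by
          have h1 : k * ((e + 1) * r - c) + k * c = k * ((e + 1) * r) := by
            rw [← Nat.mul_add]; congr 1; omega
          have h2 : c * (k * (q * r + 1)) + k * ((e + 1) * r)
              = (q * c + e + 1) * (r * k) + k * c := by ring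
          rw [hn, htc]
          omega
        have hid2 : c * n + ((e + 1) * r - c) = t * r := by
          have h1 : c * (q * r + 1) + (e + 1) * r = (q * c + e + 1) * r + c := by ring
          rw [hn, htc]
          omega
        by_cases hc2 : c + 2 ≤ r
        · rw [if_pos hc2] at hsF hsA
          have hxy : subCol T (k * n) (c + 1) t + subCol T (k * n) (c + 2) t
              = k * ((e + 1) * r - c) := by omega
          by_cases hy0 : subCol T (k * n) (c + 2) t = 0
          · have hx : subCol T (k * n) (c + 1) t = k * ((e + 1) * r - c) := by omega
            rw [hsF, hx, subFc_mul k r n _ hk hSle, hy0, subFc_zero k r n hk]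
            omega
          · have he1 : 1 ≤ e := by
              by_contra h
              push_neg at h
              have hm1 := hm (c + 1) (by omega) (by omega)
              apply hy0
              apply hA_zero (c + 2) (by omega) hc2
              have h8 : c + 2 - 2 = c := by omega
              have h9 : c + 2 - 1 = c + 1 := by omega
              rw [h8, h9]
              have h2 : c * q = q * c := Nat.mul_comm c q
              omega
            have hybound : subCol T (k * n) (c + 2) t ≤ k * (r - (c + 1)) := by
              have hts : (c + 1) * q + 1 ≤ n := by
                have h1 : (c + 1) * q ≤ r * q := Nat.mul_le_mul_right q (by omega)
                have h2 : r * q = q * r := Nat.mul_comm r q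
                omega
              have hsum2 := hAsum ((c + 1) * q + 1) hts
              have hsplit2 : ∑ j ∈ Finset.Ioc 0 (c + 1), subCol T (k * n) j ((c + 1) * q + 1)
                  + ∑ j ∈ Finset.Ioc (c + 1) r, subCol T (k * n) j ((c + 1) * q + 1)
                  = ∑ j ∈ Finset.Icc 1 r, subCol T (k * n) j ((c + 1) * q + 1) := by
                rw [hIoc]
                exact Finset.sum_Ioc_consecutive _ (by omega) (by omega)
              have hfull2 : ∑ j ∈ Finset.Ioc 0 (c + 1), subCol T (k * n) j ((c + 1) * q + 1)
                  = (c + 1) * (k * n) := by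
                calc ∑ j ∈ Finset.Ioc 0 (c + 1), subCol T (k * n) j ((c + 1) * q + 1)
                    = ∑ _j ∈ Finset.Ioc 0 (c + 1), k * n :=
                      Finset.sum_congr rfl (fun j hj => by
                        rw [Finset.mem_Ioc] at hj
                        apply hA_full j hj.1 (by omega)
                        have h1 : j * q ≤ (c + 1) * q := Nat.mul_le_mul_right q hj.2
                        omega)
                _ = (c + 1) * (k * n) := by
                    rw [Finset.sum_const, Nat.card_Ioc, smul_eq_mul]
                    norm_num
              have hyle : subCol T (k * n) (c + 2) ((c + 1) * q + 1)
                  ≤ ∑ j ∈ Finset.Ioc (c + 1) r, subCol T (k * n) j ((c + 1) * q + 1) :=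
                Finset.single_le_sum (f := fun j => subCol T (k * n) j ((c + 1) * q + 1))
                  (fun j _ => Nat.zero_le _)
                  (Finset.mem_Ioc.mpr ⟨(by omega : c + 1 < c + 2), hc2⟩)
              have hidy : (c + 1) * (k * n) + k * (r - (c + 1))
                  = ((c + 1) * q + 1) * (r * k) := by
                have h1 : k * (r - (c + 1)) + k * (c + 1) = k * r := by
                  rw [← Nat.mul_add, Nat.sub_add_cancel (by omega : c + 1 ≤ r)]
                have h2 : (c + 1) * (k * (q * r + 1)) + k * r
                    = ((c + 1) * q + 1) * (r * k) + k * (c + 1) := by ring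
                rw [hn]
                omega
              have hmono := hA_mono (c + 2) t ((c + 1) * q + 1) (by
                have h1 : (c + 1) * q = q * c + q := by ring
                omega)
              omega
            have hxge : k * r ≤ subCol T (k * n) (c + 1) t := by
              have h1 : (r - (c + 1)) + r ≤ (e + 1) * r - c := by
                have h2 : 2 * r ≤ (e + 1) * r := Nat.mul_le_mul_right r (by omega)
                omega
              have h3 : k * ((r - (c + 1)) + r) = k * (r - (c + 1)) + k * r := by ring
              have h4 := Nat.mul_le_mul_left k h1
              omega
            have hylr : subCol T (k * n) (c + 2) t ≤ k * r :=
              le_trans hybound (Nat.mul_le_mul_left k (by omega))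
            have hcross := subFc_cross k r n ((e + 1) * r - c) _ _ hk (by omega)
              hxy hSle hylr hxge (hA_le (c + 1) t)
            omega
        · rw [if_neg hc2] at hsF hsA
          have hx : subCol T (k * n) (c + 1) t = k * ((e + 1) * r - c) := by omega
          rw [hsF, hx, subFc_mul k r n _ hk hSle]
          omega
  -- transfer to T'
  have hFt : ∀ s, s ≤ n → ∑ j ∈ Finset.Icc 1 r,
      ((Finset.Icc 1 n).filter fun i => T' i j ≤ s).card = s * r := by
    intro s hs
    have hFA : ∀ j, 1 ≤ j → j ≤ r → ((Finset.Icc 1 n).filter fun i => T' i j ≤ s).card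
        = subFc k r n (subCol T (k * n) j s) := by
      intro j hj1 hj2
      rw [subFc]
      refine congrArg Finset.card (Finset.filter_congr fun i hi => ?_)
      rw [Finset.mem_Icc] at hi
      rw [hT's i j]
      exact hprefix j hj1 hj2 s (subSel k r i) (hselmem i hi.1 hi.2).1 (hselmem i hi.1 hi.2).2
    calc ∑ j ∈ Finset.Icc 1 r, ((Finset.Icc 1 n).filter fun i => T' i j ≤ s).card
        = ∑ j ∈ Finset.Icc 1 r, subFc k r n (subCol T (k * n) j s) :=
          Finset.sum_congr rfl (fun j hj => by
            rw [Finset.mem_Icc] at hj; exact hFA j hj.1 hj.2)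
    _ = s * r := hFsum s hs
  refine ⟨?_, ?_, ?_, ?_, ?_, ?_⟩
  · -- entries
    intro i j hi1 hi2 hj1 hj2
    rw [hT's i j]
    exact hentries _ j (hselmem i hi1 hi2).1 (hselmem i hi1 hi2).2 hj1 hj2
  · -- rows
    intro i j hi1 hi2 hj1 hjr'
    rw [hT's i j, hT's i (j + 1)]
    exact hrows _ j (hselmem i hi1 hi2).1 (hselmem i hi1 hi2).2 hj1 hjr'
  · -- columns
    intro i j hi1 hi2 hj1 hj2
    rw [hT's i j, hT's (i + 1) j]
    exact hcolmono j hj1 hj2 _ _ (hselmem i hi1 (by omega)).1 (hselmono i hi1 hi2)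
      (hselmem (i + 1) (by omega) hi2).2
  · -- counts
    intro t ht1 htn
    rw [subProd n r (fun i j => T' i j = t)]
    have hstep : ∀ j, 1 ≤ j → j ≤ r →
        ((Finset.Icc 1 n).filter fun i => T' i j ≤ t - 1).card
        + ((Finset.Icc 1 n).filter fun i => T' i j = t).card
        = ((Finset.Icc 1 n).filter fun i => T' i j ≤ t).card := by
      intro j _ _
      have hu : ((Finset.Icc 1 n).filter fun i => T' i j ≤ t)
          = ((Finset.Icc 1 n).filter fun i => T' i j ≤ t - 1)
            ∪ ((Finset.Icc 1 n).filter fun i => T' i j = t) := by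
        rw [← Finset.filter_or]
        exact Finset.filter_congr (fun i _ => by omega)
      rw [hu, Finset.card_union_of_disjoint]
      rw [Finset.disjoint_left]
      intro i h1 h2
      rw [Finset.mem_filter] at h1 h2
      omega
    have hsum1 : ∑ j ∈ Finset.Icc 1 r,
        (((Finset.Icc 1 n).filter fun i => T' i j ≤ t - 1).card
          + ((Finset.Icc 1 n).filter fun i => T' i j = t).card)
        = ∑ j ∈ Finset.Icc 1 r, ((Finset.Icc 1 n).filter fun i => T' i j ≤ t).card :=
      Finset.sum_congr rfl (fun j hj => by
        rw [Finset.mem_Icc] at hj; exact hstep j hj.1 hj.2)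
    rw [Finset.sum_add_distrib] at hsum1
    rw [hFt (t - 1) (by omega), hFt t htn] at hsum1
    have hmul : (t - 1) * r + r = t * r := by
      cases t with
      | zero => omega
      | succ t' => simp [Nat.succ_sub_one, Nat.succ_mul]
    omega
  · -- last row
    intro j hj1 hj2
    rw [hT' n j, if_neg (by omega)]
    exact hlast j hj1 hj2
  · -- first row
    intro j hj2 hjr'
    rw [hT' 1 j, if_pos (by omega : (1 : ℕ) ≤ r)]
    have h1 : k * (1 - 1) + 1 = 1 := by simp
    rw [h1]
    exact hfirst j hj2 hjr'
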